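/- arXiv:2403.09337 — 2 statements merged into one kernel-verified Lean document; each statement's English description precedes it below -/
import Mathlib

section
/- Let F be a field of characteristic zero, L a finite-dimensional split-semisimple Lie algebra over F with splitting Cartan subalgebra H, A an associative F-algebra, and φ : L → Der_F(A) a Lie algebra homomorphism into the Lie algebra of F-linear derivations of A. Call a two-sided ideal I of A an L-ideal if φ(d)(I) ⊆ I for all d ∈ L. Suppose a_1, …, a_n ∈ A are weight vectors of pairwise distinct weights, i.e., there exist pairwise distinct linear maps λ_1, …, λ_n : H → F such that φ(h)(a_j) = λ_j(h)·a_j for all h ∈ H and 1 ≤ j ≤ n. Then the smallest L-ideal of A containing {a_1, …, a_n} equals the smallest L-ideal of A containing the single element a_1 + ⋯ + a_n. -/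
attribute [local instance] LieRing.ofAssociativeRing

/-- `φ : L → End_F(A)` acts by derivations: each `φ d` satisfies the Leibniz rule. -/
def ActsByDerivations (F : Type*) [Field F] {L A : Type*} [LieRing L] [LieAlgebra F L]
    [Ring A] [Algebra F A] (φ : L →ₗ⁅F⁆ Module.End F A) : Prop :=
  ∀ (d : L) (a b : A), φ d (a * b) = φ d a * b + a * φ d b

/-- A subset `I ⊆ A` is an `L`-ideal (for the action `φ`): it is a two-sided ideal of `A`
which is invariant under all the operators `φ d`, `d ∈ L`. -/
def IsLIdealSet (F : Type*) [Field F] {L A : Type*} [LieRing L] [LieAlgebra F L]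
    [Ring A] [Algebra F A] (φ : L →ₗ⁅F⁆ Module.End F A) (I : Set A) : Prop :=
  (0 : A) ∈ I ∧ (∀ x ∈ I, ∀ y ∈ I, x + y ∈ I) ∧ (∀ x ∈ I, -x ∈ I) ∧
    (∀ x ∈ I, ∀ a : A, a * x ∈ I ∧ x * a ∈ I) ∧ (∀ x ∈ I, ∀ d : L, φ d x ∈ I)

/-- **primitive element lemma.**  Let `F` be a field of characteristic zero, `L`
a finite-dimensional split-semisimple Lie algebra over `F` with splitting Cartan subalgebra `H`,
`A` an associative `F`-algebra, and `φ : L → Der_F(A)` a Lie algebra homomorphism into the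
derivations of `A`.  If `a 0, …, a (n-1)` are weight vectors of pairwise distinct weights
`lam 0, …, lam (n-1) : H → F`, then the smallest `L`-ideal of `A` containing all the `a j`
equals the smallest `L`-ideal containing the single element `∑ j, a j`. -/
theorem primitive_element_lemma
    (F : Type*) [Field F] [CharZero F]
    (L : Type*) [LieRing L] [LieAlgebra F L] [FiniteDimensional F L]
    [LieAlgebra.IsSemisimple F L]
    (H : LieSubalgebra F L) (hH : H.IsCartanSubalgebra)
    (hsplit : ∀ h ∈ H, Polynomial.Splits
      (LinearMap.charpoly (LieAlgebra.ad F L h)))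
    (A : Type*) [Ring A] [Algebra F A]
    (φ : L →ₗ⁅F⁆ Module.End F A) (hφ : ActsByDerivations F φ)
    (n : ℕ) (a : Fin n → A) (lam : Fin n → (H →ₗ[F] F))
    (hdist : Function.Injective lam)
    (hwt : ∀ (h : H) (j : Fin n), φ (h : L) (a j) = lam j h • a j) :
    ⋂₀ {I : Set A | IsLIdealSet F φ I ∧ Set.range a ⊆ I}
      = ⋂₀ {I : Set A | IsLIdealSet F φ I ∧ (∑ j, a j) ∈ I} := by
  classical
  -- It suffices to show the two families of ideals coincide.
  have key : {I : Set A | IsLIdealSet F φ I ∧ Set.range a ⊆ I}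
      = {I : Set A | IsLIdealSet F φ I ∧ (∑ j, a j) ∈ I} := by
    ext I
    simp only [Set.mem_setOf_eq]
    constructor
    · rintro ⟨hI, hsub⟩
      refine ⟨hI, ?_⟩
      exact Finset.sum_induction a (· ∈ I) (fun x y hx hy => hI.2.1 x hx y hy) hI.1
        (fun j _ => hsub ⟨j, rfl⟩)
    · rintro ⟨hI, hsum⟩
      refine ⟨hI, ?_⟩
      rintro x ⟨j, rfl⟩
      -- Pick `h ∈ H` separating all the weights.
      obtain ⟨h, hh⟩ : ∃ h : H, ∀ i j : Fin n, i ≠ j → lam i h ≠ lam j h := by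
        by_contra hcon
        push_neg at hcon
        set s : Finset (Subspace F H) :=
          (Finset.univ.filter (fun p : Fin n × Fin n => p.1 ≠ p.2)).image
            (fun p => LinearMap.ker (lam p.1 - lam p.2)) with hs
        have htop : ⊤ ∉ s := by
          intro hmem
          simp only [hs, Finset.mem_image, Finset.mem_filter] at hmem
          obtain ⟨⟨i, j⟩, ⟨-, hij⟩, hker⟩ := hmem
          have : lam i - lam j = 0 := by
            rwa [← LinearMap.ker_eq_top]
          exact hij (hdist (by rwa [sub_eq_zero] at this))
        have hcover : ⋃ p ∈ s, (p : Set H) = Set.univ := by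
          ext h
          simp only [Set.mem_iUnion, Set.mem_univ, iff_true]
          obtain ⟨i, j, hij, hval⟩ := hcon h
          refine ⟨LinearMap.ker (lam i - lam j), ?_, ?_⟩
          · simp only [hs, Finset.mem_image, Finset.mem_filter]
            exact ⟨(i, j), ⟨Finset.mem_univ _, hij⟩, rfl⟩
          · simp [LinearMap.mem_ker, sub_eq_zero, hval]
        exact Subspace.biUnion_ne_univ_of_top_notMem htop hcover
      set μ : Fin n → F := fun i => lam i h with hμ
      have hμinj : Function.Injective μ := by
        intro i j hij
        by_contra hne
        exact hh i j hne hij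
      -- powers of `φ h` applied to the sum stay in `I`
      have hpow : ∀ (k : ℕ) (i : Fin n), ((φ (h : L)) ^ k) (a i) = μ i ^ k • a i := by
        intro k i
        induction k with
        | zero => simp
        | succ k ih =>
          rw [pow_succ, Module.End.mul_apply, hwt, map_smul, ih, smul_smul, ← pow_succ']
      have hsk : ∀ k : ℕ, (∑ i, μ i ^ k • a i) ∈ I := by
        intro k
        have hmem : ((φ (h : L)) ^ k) (∑ j, a j) ∈ I := by
          induction k with
          | zero => simpa using hsum
          | succ k ih =>
            rw [pow_succ', Module.End.mul_apply]
            exact hI.2.2.2.2 _ ih _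
        rw [map_sum] at hmem
        simp only [hpow] at hmem
        exact hmem
      -- Vandermonde inversion
      set V : Matrix (Fin n) (Fin n) F := (Matrix.vandermonde μ).transpose with hV
      have hdet : V.det ≠ 0 := by
        rw [hV, Matrix.det_transpose, Matrix.det_vandermonde]
        refine Finset.prod_ne_zero_iff.mpr fun i _ => Finset.prod_ne_zero_iff.mpr fun l hl =>
          sub_ne_zero.mpr fun e => ?_
        exact (Finset.mem_Ioi.mp hl).ne' (hμinj e)
      set W : Matrix (Fin n) (Fin n) F := V⁻¹ with hW
      have hWV : W * V = 1 := Matrix.nonsing_inv_mul V (Ne.isUnit hdet)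
      have haj : a j = ∑ k, W j k • (∑ i, μ i ^ (k : ℕ) • a i) := by
        have h1 : ∀ k : Fin n, W j k • (∑ i, μ i ^ (k : ℕ) • a i)
            = ∑ i, (W j k * V k i) • a i := by
          intro k
          rw [Finset.smul_sum]
          refine Finset.sum_congr rfl fun i _ => ?_
          rw [smul_smul]
          simp [hV, Matrix.vandermonde, Matrix.transpose_apply]
        simp only [h1]
        rw [Finset.sum_comm]
        have h2 : ∀ i, (∑ k, (W j k * V k i) • a i) = ((W * V) j i) • a i := by
          intro i
          rw [← Finset.sum_smul]
          rfl
        simp only [h2, hWV, Matrix.one_apply]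
        simp [ite_smul]
      rw [haj]
      refine Finset.sum_induction _ (· ∈ I) (fun x y hx hy => hI.2.1 x hx y hy) hI.1
        (fun k _ => ?_)
      have := hsk k
      rw [Algebra.smul_def]
      exact (hI.2.2.2.1 _ this _).1
  rw [key]
end

section
/- Let F be a field of characteristic zero and k ≥ 2. The unital F-subalgebra U of End_F(M_k(F)) generated by the inner derivations ad_a for a ∈ M_k(F) equals the set of all f ∈ End_F(M_k(F)) such that f(F·I_k) ⊆ F·I_k and f(sl_k(F)) ⊆ sl_k(F); equivalently, U is isomorphic as an F-algebra to End_F(F·I_k) ⊕ End_F(sl_k(F)). In particular, dim_F U = (k² − 1)² + 1. -/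
open Matrix LinearMap Finset

namespace Stmt5
variable {F : Type*} [Field F] {k : ℕ}

local notation "M" => Matrix (Fin k) (Fin k) F
local notation "E" => fun (a b : Fin k) => (Matrix.single a b 1 : M)

lemma s5 (z : M) (a b c d : Fin k) : E a b * z * E c d = z b c • Matrix.single a d 1 := by
  ext p q
  by_cases hp : a = p <;> by_cases hq : d = q <;>
    simp [Matrix.mul_apply, Matrix.single, ite_and, hp, hq, mul_comm]

lemma s2 (w : M) (a c : Fin k) : ∑ b, E a b * w * E b c = w.trace • Matrix.single a c 1 := by
  simp [s5, Matrix.trace, Matrix.diag, Finset.sum_smul]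

lemma sum_diag_one : (∑ a, E a a) = (1 : M) := by
  ext p q
  simp [Matrix.sum_apply, Matrix.single, Matrix.one_apply, ite_and]

lemma s3 (w : M) (a c : Fin k) : ∑ b, E b c * w * E a b = w c a • 1 := by
  have : ∀ b, E b c * w * E a b = w c a • E b b := fun b => s5 w b c a b
  rw [Finset.sum_congr rfl fun b _ => this b, ← Finset.smul_sum, sum_diag_one]

lemma s1 (a c : Fin k) : ∑ b, E a b * E b c = (k : F) • Matrix.single a c 1 := by
  simp [Matrix.single_mul_single_same, Finset.sum_const, Finset.card_univ,
    Nat.cast_smul_eq_nsmul]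

lemma sum_EE : ∑ a, ∑ b, E a b * E b a = (k : F) • (1 : M) := by
  rw [Finset.sum_congr rfl fun a _ => s1 a a, ← Finset.smul_sum, sum_diag_one]

lemma sum_conj (z : M) : ∑ a, ∑ b, E a b * z * E b a = z.trace • (1 : M) := by
  rw [Finset.sum_congr rfl fun a _ => s2 z a a, ← Finset.smul_sum, sum_diag_one]

lemma sum_conj' (z : M) : ∑ a, ∑ b, E b a * z * E a b = z.trace • (1 : M) := by
  rw [Finset.sum_comm]; exact sum_conj z

lemma sum_EE' : ∑ a : Fin k, ∑ b, E b a * E a b = (k : F) • (1 : M) := by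
  rw [Finset.sum_comm]; exact sum_EE

/-- inner derivation -/
def ad (a : M) : Module.End F M := mulLeft F a - mulRight F a

@[simp] lemma ad_apply (a z : M) : ad a z = a * z - z * a := rfl

/-- normalized trace projection onto F·1 -/
noncomputable def tau : Module.End F M :=
  (k : F)⁻¹ • (traceLinearMap (Fin k) F F).smulRight 1

/-- projection onto sl along F·1 -/
noncomputable def pr : Module.End F M := 1 - tau

@[simp] lemma tau_apply (z : M) : tau z = (k:F)⁻¹ • z.trace • (1 : M) := by
  simp [tau, smul_smul]

@[simp] lemma pr_apply (z : M) : pr z = z - (k:F)⁻¹ • z.trace • (1 : M) := by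
  simp [pr, tau_apply]

lemma trace_pr (hk0 : (k:F) ≠ 0) (z : M) : (pr (F := F) (k := k) z).trace = 0 := by
  simp [pr_apply, Matrix.trace_sub, Matrix.trace_smul, Matrix.trace_one, smul_eq_mul]
  field_simp
  simp

lemma pr_of_trace_zero {z : M} (h : z.trace = 0) : pr (F := F) (k := k) z = z := by
  simp [pr_apply, h]

lemma pr_smul_one (hk0 : (k:F) ≠ 0) (c : F) : pr (F := F) (k := k) (c • (1 : M)) = 0 := by
  simp [pr_apply, Matrix.trace_smul, Matrix.trace_one, smul_smul, smul_eq_mul]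
  right
  rw [inv_mul_cancel₀ hk0, one_smul, sub_self]

lemma pr_one' (hk0 : (k:F) ≠ 0) : pr (F := F) (k := k) (1 : M) = 0 := by
  simpa using pr_smul_one hk0 1

lemma tau_smul_one (hk0 : (k:F) ≠ 0) (c : F) : tau (F := F) (k := k) (c • (1 : M)) = c • 1 := by
  simp [tau_apply, Matrix.trace_smul, Matrix.trace_one, smul_smul, smul_eq_mul]
  rw [inv_mul_cancel₀ hk0, mul_one]

lemma key1 (z : M) :
    ∑ a : Fin k, ∑ b, (ad (E a b) * ad (E b a) : Module.End F M) z
      = (2*(k:F)) • z - (2:F) • z.trace • (1 : M) := by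
  have h : ∀ a b : Fin k, (ad (E a b) * ad (E b a) : Module.End F M) z
      = (E a b * E b a) * z - E a b * z * E b a - E b a * z * E a b + z * (E b a * E a b) := by
    intro a b
    simp only [Module.End.mul_apply, ad_apply]
    noncomm_ring
  rw [Finset.sum_congr rfl fun a _ => Finset.sum_congr rfl fun b _ => h a b]
  simp only [Finset.sum_add_distrib, Finset.sum_sub_distrib, ← Finset.sum_mul, ← Finset.mul_sum]
  rw [sum_EE, sum_EE', sum_conj, sum_conj', smul_mul_assoc, one_mul, mul_smul_comm, mul_one]
  module

end Stmt5

namespace Part2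
open Stmt5
variable {F : Type*} [Field F] {k : ℕ}
local notation "M" => Matrix (Fin k) (Fin k) F
local notation "E" => fun (a b : Fin k) => (Matrix.single a b 1 : M)

/-- the adjoin algebra -/
noncomputable def U (F : Type*) [Field F] (k : ℕ) : Subalgebra F (Module.End F (Matrix (Fin k) (Fin k) F)) :=
  Algebra.adjoin F (Set.range fun a : Matrix (Fin k) (Fin k) F =>
    LinearMap.mulLeft F a - LinearMap.mulRight F a)

lemma ad_mem (a : M) : ad a ∈ U F k := Algebra.subset_adjoin ⟨a, rfl⟩

lemma pr_mem (hk0 : (k:F) ≠ 0) (h2 : (2:F) ≠ 0) : pr (F := F) (k := k) ∈ U F k := by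
  have hsum : (∑ a : Fin k, ∑ b, ad (E a b) * ad (E b a)) = (2*(k:F)) • pr (F := F) (k := k) := by
    apply LinearMap.ext; intro z
    rw [LinearMap.smul_apply]
    simp only [LinearMap.sum_apply]
    rw [key1, pr_apply, smul_sub, smul_smul, smul_smul]
    rw [mul_assoc, mul_inv_cancel₀ hk0, mul_one]
    module
  have hmem : (∑ a : Fin k, ∑ b, ad (E a b) * ad (E b a)) ∈ U F k :=
    Subalgebra.sum_mem _ fun a _ => Subalgebra.sum_mem _ fun b _ =>
      mul_mem (ad_mem _) (ad_mem _)
  have h2k : (2*(k:F)) ≠ 0 := mul_ne_zero h2 hk0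
  have : pr (F := F) (k := k) = (2*(k:F))⁻¹ • (∑ a : Fin k, ∑ b, ad (E a b) * ad (E b a)) := by
    rw [hsum, smul_smul, inv_mul_cancel₀ h2k, one_smul]
  rw [this]
  exact Subalgebra.smul_mem _ hmem _

lemma s4 (a c : Fin k) : ∑ b, E b c * E a b = ((1:M) c a) • (1 : M) := by
  have := s3 (F := F) (k := k) 1 a c
  simpa using this

lemma key2 (a c : Fin k) (z : M) :
    ∑ b, ad (E a b) (ad (E b c) z)
      = (k:F) • (E a c * z) - z.trace • E a c - z c a • (1:M) + ((1:M) c a) • z := by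
  have h : ∀ b : Fin k, (ad (E a b) (ad (E b c) z) : M)
      = (E a b * E b c) * z - E a b * z * E b c - E b c * z * E a b + z * (E b c * E a b) := by
    intro b
    simp only [ad_apply]
    noncomm_ring
  rw [Finset.sum_congr rfl fun b _ => h b]
  simp only [Finset.sum_add_distrib, Finset.sum_sub_distrib, ← Finset.sum_mul, ← Finset.mul_sum]
  rw [s1, s2, s3, s4, smul_mul_assoc, mul_smul_comm, mul_one]

lemma piLpi_basis (hk0 : (k:F) ≠ 0) (h2 : (2:F) ≠ 0) (a c : Fin k) :
    pr (F := F) (k := k) * LinearMap.mulLeft F (E a c) * pr ∈ U F k := by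
  have hid : pr (F := F) (k := k) * (∑ b, ad (E a b) * ad (E b c)) * pr
      = (k:F) • (pr (F := F) (k := k) * LinearMap.mulLeft F (E a c) * pr) + ((1:M) c a) • pr := by
    apply LinearMap.ext; intro z
    have hw : (pr (F := F) (k := k) z).trace = 0 := trace_pr hk0 z
    simp only [Module.End.mul_apply, LinearMap.add_apply, LinearMap.smul_apply,
      LinearMap.sum_apply]
    rw [key2, hw]
    simp only [zero_smul, sub_zero, map_add, map_sub, _root_.map_smul]
    rw [pr_one' hk0, pr_of_trace_zero hw]
    simp
  have hmem : pr (F := F) (k := k) * (∑ b, ad (E a b) * ad (E b c)) * pr ∈ U F k :=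
    mul_mem (mul_mem (pr_mem hk0 h2)
      (Subalgebra.sum_mem _ fun b _ => mul_mem (ad_mem _) (ad_mem _))) (pr_mem hk0 h2)
  have : pr (F := F) (k := k) * LinearMap.mulLeft F (E a c) * pr
      = (k:F)⁻¹ • (pr (F := F) (k := k) * (∑ b, ad (E a b) * ad (E b c)) * pr
          - ((1:M) c a) • pr) := by
    rw [hid]; rw [add_sub_cancel_right, smul_smul, inv_mul_cancel₀ hk0, one_smul]
  rw [this]
  exact Subalgebra.smul_mem _ (sub_mem hmem (Subalgebra.smul_mem _ (pr_mem hk0 h2) _)) _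

/-- left multiplication as a linear map -/
def mull : M →ₗ[F] Module.End F (Matrix (Fin k) (Fin k) F) where
  toFun a := LinearMap.mulLeft F a
  map_add' a b := by apply LinearMap.ext; intro z; simp [add_mul]
  map_smul' c a := by apply LinearMap.ext; intro z; simp [smul_mul_assoc]

lemma piLpi (hk0 : (k:F) ≠ 0) (h2 : (2:F) ≠ 0) (u : M) :
    pr (F := F) (k := k) * LinearMap.mulLeft F u * pr ∈ U F k := by
  induction u using Matrix.induction_on' with
  | h_zero =>
      have : LinearMap.mulLeft F (0 : M) = 0 := by
        apply LinearMap.ext; intro z; simp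
      rw [this, mul_zero, zero_mul]; exact zero_mem _
  | h_add x y hx hy =>
      have : LinearMap.mulLeft F (x + y) = LinearMap.mulLeft F x + LinearMap.mulLeft F y := by
        apply LinearMap.ext; intro z; simp [add_mul]
      rw [this, mul_add, add_mul]; exact add_mem hx hy
  | h_std_basis i j x =>
      have hsb : (Matrix.single i j x : M) = x • E i j := by
        rw [smul_single, smul_eq_mul, mul_one]
      have : LinearMap.mulLeft F (Matrix.single i j x : M)
          = x • LinearMap.mulLeft F (E i j) := by
        apply LinearMap.ext; intro z; rw [LinearMap.mulLeft_apply, hsb]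
        rw [smul_mul_assoc]; simp
      rw [this, mul_smul_comm, smul_mul_assoc]
      exact Subalgebra.smul_mem _ (piLpi_basis hk0 h2 i j) _

lemma trace_comm_zero (y w : M) : (y * w - w * y).trace = 0 := by
  rw [Matrix.trace_sub, Matrix.trace_mul_comm, sub_self]

lemma piMupi (hk0 : (k:F) ≠ 0) (h2 : (2:F) ≠ 0) (x y : M) :
    pr (F := F) (k := k) * (LinearMap.mulLeft F x * LinearMap.mulRight F y) * pr ∈ U F k := by
  have hid : pr (F := F) (k := k) * (LinearMap.mulLeft F x * LinearMap.mulRight F y) * pr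
      = pr * LinearMap.mulLeft F (x * y) * pr
        - (pr * LinearMap.mulLeft F x * pr) * (pr * ad y * pr) := by
    apply LinearMap.ext; intro z
    set w := pr (F := F) (k := k) z with hw
    have hwt : (y * w - w * y).trace = 0 := trace_comm_zero y w
    simp only [Module.End.mul_apply, LinearMap.sub_apply, LinearMap.mulLeft_apply,
      LinearMap.mulRight_apply, ad_apply, ← hw]
    rw [pr_of_trace_zero hwt, pr_of_trace_zero hwt]
    rw [mul_sub, map_sub, mul_assoc x y w]
    abel
  rw [hid]
  exact sub_mem (piLpi hk0 h2 _)
    (mul_mem (piLpi hk0 h2 _) (mul_mem (mul_mem (pr_mem hk0 h2) (ad_mem _)) (pr_mem hk0 h2)))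

lemma mat_decomp (w : M) : ∑ a, ∑ d, w a d • E a d = w := by
  ext p q
  simp [Matrix.sum_apply, Matrix.single, ite_and, Finset.sum_ite_eq, mul_comm]

lemma end_decomp (h : Module.End F (Matrix (Fin k) (Fin k) F)) :
    h = ∑ b, ∑ c, ∑ a, ∑ d, (h (E b c)) a d •
        (LinearMap.mulLeft F (E a b) * LinearMap.mulRight F (E c d)) := by
  apply LinearMap.ext; intro z
  simp only [LinearMap.sum_apply, LinearMap.smul_apply, Module.End.mul_apply,
    LinearMap.mulLeft_apply, LinearMap.mulRight_apply]
  have hterm : ∀ b c a d : Fin k, (h (E b c)) a d • (E a b * (z * E c d))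
      = z b c • ((h (E b c)) a d • E a d) := by
    intro b c a d
    rw [← mul_assoc, s5, smul_comm]
  rw [Finset.sum_congr rfl fun b _ => Finset.sum_congr rfl fun c _ =>
    Finset.sum_congr rfl fun a _ => Finset.sum_congr rfl fun d _ => hterm b c a d]
  simp only [← Finset.smul_sum]
  rw [Finset.sum_congr rfl fun b _ => Finset.sum_congr rfl fun c _ =>
    congrArg (z b c • ·) (mat_decomp (h (E b c)))]
  have : ∑ b, ∑ c, z b c • h (E b c) = h (∑ b, ∑ c, z b c • E b c) := by
    simp only [map_sum, _root_.map_smul]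
  rw [this, Finset.sum_congr rfl fun b _ => Finset.sum_congr rfl fun c _ =>
    (smul_single (z b c) b c 1).trans (by rw [smul_eq_mul, mul_one]),
    ← matrix_eq_sum_single]

lemma pihpi (hk0 : (k:F) ≠ 0) (h2 : (2:F) ≠ 0) (h : Module.End F (Matrix (Fin k) (Fin k) F)) :
    pr (F := F) (k := k) * h * pr ∈ U F k := by
  have hd := end_decomp h
  have : pr (F := F) (k := k) * h * pr
      = ∑ b, ∑ c, ∑ a, ∑ d, (h (E b c)) a d •
          (pr (F := F) (k := k) * (LinearMap.mulLeft F (E a b) * LinearMap.mulRight F (E c d)) * pr) := by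
    conv_lhs => rw [hd]
    simp only [Finset.mul_sum, Finset.sum_mul, mul_smul_comm, smul_mul_assoc]
  rw [this]
  exact Subalgebra.sum_mem _ fun b _ => Subalgebra.sum_mem _ fun c _ =>
    Subalgebra.sum_mem _ fun a _ => Subalgebra.sum_mem _ fun d _ =>
      Subalgebra.smul_mem _ (piMupi hk0 h2 _ _) _

/-- the target subalgebra -/
def Tsub (F : Type*) [Field F] (k : ℕ) :
    Subalgebra F (Module.End F (Matrix (Fin k) (Fin k) F)) where
  carrier := {f | (∀ x : Matrix (Fin k) (Fin k) F, (∃ c : F, x = c • 1) → ∃ c : F, f x = c • 1) ∧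
      (∀ x : Matrix (Fin k) (Fin k) F, x.trace = 0 → (f x).trace = 0)}
  mul_mem' := by
    rintro f g ⟨hf1, hf2⟩ ⟨hg1, hg2⟩
    exact ⟨fun x hx => hf1 _ (hg1 x hx), fun x hx => hf2 _ (hg2 x hx)⟩
  add_mem' := by
    rintro f g ⟨hf1, hf2⟩ ⟨hg1, hg2⟩
    refine ⟨fun x hx => ?_, fun x hx => ?_⟩
    · obtain ⟨c1, h1⟩ := hf1 x hx
      obtain ⟨c2, h2⟩ := hg1 x hx
      exact ⟨c1 + c2, by simp [LinearMap.add_apply, h1, h2, add_smul]⟩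
    · simp [LinearMap.add_apply, Matrix.trace_add, hf2 x hx, hg2 x hx]
  one_mem' := ⟨fun x hx => hx, fun x hx => hx⟩
  algebraMap_mem' := by
    intro c
    refine ⟨fun x hx => ?_, fun x hx => ?_⟩
    · obtain ⟨d, rfl⟩ := hx
      exact ⟨c * d, by simp [Module.algebraMap_end_apply, smul_smul, mul_comm]⟩
    · simp [Module.algebraMap_end_apply, Matrix.trace_smul, hx]

lemma U_le_T : U F k ≤ Tsub F k := by
  rw [U]
  apply Algebra.adjoin_le
  rintro f ⟨a, rfl⟩
  refine ⟨fun x hx => ?_, fun x hx => ?_⟩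
  · obtain ⟨c, rfl⟩ := hx
    refine ⟨0, ?_⟩
    simp [LinearMap.sub_apply, mul_smul_comm, smul_mul_assoc]
  · simpa [LinearMap.sub_apply] using trace_comm_zero a x

lemma T_le_U (hk0 : (k:F) ≠ 0) (h2 : (2:F) ≠ 0) : Tsub F k ≤ U F k := by
  rintro f ⟨hf1, hf2⟩
  obtain ⟨c, hc⟩ := hf1 1 ⟨1, by simp⟩
  have hid : f = algebraMap F (Module.End F (Matrix (Fin k) (Fin k) F)) c
      - c • pr + pr * f * pr := by
    apply LinearMap.ext; intro z
    have e3 : pr (F := F) (k := k) (f (pr z)) = f (pr z) :=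
      pr_of_trace_zero (hf2 _ (trace_pr hk0 z))
    simp only [LinearMap.sub_apply, LinearMap.add_apply, LinearMap.smul_apply,
      Module.End.mul_apply, Module.algebraMap_end_apply]
    rw [e3, pr_apply, map_sub, _root_.map_smul, _root_.map_smul, hc]
    module
  rw [hid]
  exact add_mem (sub_mem (Subalgebra.algebraMap_mem _ _)
    (Subalgebra.smul_mem _ (pr_mem hk0 h2) _)) (pihpi hk0 h2 f)

lemma U_eq_T (hk0 : (k:F) ≠ 0) (h2 : (2:F) ≠ 0) : U F k = Tsub F k :=
  le_antisymm U_le_T (T_le_U hk0 h2)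

section Equiv
set_option synthInstance.maxHeartbeats 1000000
set_option maxHeartbeats 1000000
variable (F) (k)

local notation "V₁" => Submodule.span F {(1 : Matrix (Fin k) (Fin k) F)}
local notation "V₂" => LinearMap.ker (Matrix.traceLinearMap (Fin k) F F)

lemma memV1 {x : M} : x ∈ V₁ ↔ ∃ c : F, x = c • 1 := by
  rw [Submodule.mem_span_singleton]
  constructor <;> rintro ⟨c, h⟩ <;> exact ⟨c, h.symm⟩

lemma memV2 {x : M} : x ∈ V₂ ↔ x.trace = 0 := by
  rw [LinearMap.mem_ker]; rfl

variable {F k}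

/-- restriction of an element of Tsub to V₁ -/
noncomputable def res1 (f : ↥(Tsub F k)) : Module.End F ↥V₁ :=
  LinearMap.restrict f.1 (fun x hx => (memV1 F k).2 (f.2.1 x ((memV1 F k).1 hx)))

/-- restriction of an element of Tsub to V₂ -/
noncomputable def res2 (f : ↥(Tsub F k)) : Module.End F ↥V₂ :=
  LinearMap.restrict f.1 (fun x hx => (memV2 F k).2 (f.2.2 x ((memV2 F k).1 hx)))

/-- the linear map Tsub → End V₁ × End V₂ -/
noncomputable def PhiL : ↥(Tsub F k) →ₗ[F] (Module.End F ↥V₁ × Module.End F ↥V₂) where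
  toFun f := (res1 f, res2 f)
  map_add' f g := by
    refine Prod.ext ?_ ?_ <;> apply LinearMap.ext <;> rintro ⟨x, hx⟩ <;>
      apply Subtype.ext <;> simp [res1, res2, LinearMap.restrict_apply]
  map_smul' c f := by
    refine Prod.ext ?_ ?_ <;> apply LinearMap.ext <;> rintro ⟨x, hx⟩ <;>
      apply Subtype.ext <;> simp [res1, res2, LinearMap.restrict_apply]

/-- the algebra hom Tsub → End V₁ × End V₂ -/
noncomputable def Phi : ↥(Tsub F k) →ₐ[F] (Module.End F ↥V₁ × Module.End F ↥V₂) :=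
  AlgHom.ofLinearMap PhiL
    (by
      refine Prod.ext ?_ ?_ <;> apply LinearMap.ext <;> rintro ⟨x, hx⟩ <;>
        apply Subtype.ext <;> simp [PhiL, res1, res2, LinearMap.restrict_apply])
    (by
      intro f g
      refine Prod.ext ?_ ?_ <;> apply LinearMap.ext <;> rintro ⟨x, hx⟩ <;>
        apply Subtype.ext <;>
        simp [PhiL, res1, res2, LinearMap.restrict_apply, Module.End.mul_apply])

lemma tau_mem_V1 (z : M) : tau (F := F) (k := k) z ∈ V₁ :=
  (memV1 F k).2 ⟨(k:F)⁻¹ * z.trace, by rw [tau_apply, smul_smul]⟩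

lemma pr_mem_V2 (hk0 : (k:F) ≠ 0) (z : M) : pr (F := F) (k := k) z ∈ V₂ :=
  (memV2 F k).2 (trace_pr hk0 z)

lemma tau_add_pr (z : M) : tau (F := F) (k := k) z + pr z = z := by
  simp [pr]

lemma Phi_injective (hk0 : (k:F) ≠ 0) :
    Function.Injective (Phi : ↥(Tsub F k) →ₐ[F] _) := by
  intro f g h
  have h1 : res1 f = res1 g := congrArg Prod.fst h
  have h2 : res2 f = res2 g := congrArg Prod.snd h
  have hv1 : ∀ x (hx : x ∈ V₁), f.1 x = g.1 x := fun x hx =>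
    congrArg Subtype.val (LinearMap.congr_fun h1 ⟨x, hx⟩)
  have hv2 : ∀ x (hx : x ∈ V₂), f.1 x = g.1 x := fun x hx =>
    congrArg Subtype.val (LinearMap.congr_fun h2 ⟨x, hx⟩)
  apply Subtype.ext
  apply LinearMap.ext; intro z
  have : f.1 (tau z + pr z) = g.1 (tau z + pr z) := by
    rw [map_add, map_add, hv1 _ (tau_mem_V1 z), hv2 _ (pr_mem_V2 hk0 z)]
  rwa [tau_add_pr] at this

/-- build an element of End M from endomorphisms of V₁ and V₂ -/
noncomputable def buildf (hk0 : (k:F) ≠ 0)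
    (g1 : Module.End F ↥V₁) (g2 : Module.End F ↥V₂) : Module.End F M :=
  (Submodule.span F {(1 : M)}).subtype ∘ₗ (g1 ∘ₗ LinearMap.codRestrict _ tau tau_mem_V1)
    + (LinearMap.ker (Matrix.traceLinearMap (Fin k) F F)).subtype
        ∘ₗ (g2 ∘ₗ LinearMap.codRestrict _ pr (pr_mem_V2 hk0))

lemma buildf_apply (hk0 : (k:F) ≠ 0) (g1 : Module.End F ↥V₁) (g2 : Module.End F ↥V₂) (x : M) :
    buildf hk0 g1 g2 x = ↑(g1 ⟨tau x, tau_mem_V1 x⟩) + ↑(g2 ⟨pr x, pr_mem_V2 hk0 x⟩) := rfl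

lemma buildf_mem (hk0 : (k:F) ≠ 0) (g1 : Module.End F ↥V₁) (g2 : Module.End F ↥V₂) :
    buildf hk0 g1 g2 ∈ Tsub F k := by
  constructor
  · rintro x ⟨c, rfl⟩
    have htau : (⟨tau (c • (1:M)), tau_mem_V1 _⟩ : ↥V₁) = ⟨c • 1, (memV1 F k).2 ⟨c, rfl⟩⟩ :=
      Subtype.ext (tau_smul_one hk0 c)
    have hpr : (⟨pr (F := F) (k := k) (c • (1:M)), pr_mem_V2 hk0 _⟩ : ↥V₂) = 0 :=
      Subtype.ext (pr_smul_one hk0 c)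
    rw [buildf_apply, htau, hpr, map_zero]
    obtain ⟨d, hd⟩ := (memV1 F k).1 (g1 ⟨c • 1, (memV1 F k).2 ⟨c, rfl⟩⟩).2
    exact ⟨d, by simp [hd]⟩
  · intro x hx
    have htau : (⟨tau (F := F) (k := k) x, tau_mem_V1 _⟩ : ↥V₁) = 0 :=
      Subtype.ext (by simp [tau_apply, hx])
    have hpr : (⟨pr (F := F) (k := k) x, pr_mem_V2 hk0 _⟩ : ↥V₂)
        = ⟨x, (memV2 F k).2 hx⟩ := Subtype.ext (pr_of_trace_zero hx)
    rw [buildf_apply, htau, hpr, map_zero]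
    simpa using (memV2 F k).1 (g2 ⟨x, (memV2 F k).2 hx⟩).2

lemma Phi_surjective (hk0 : (k:F) ≠ 0) :
    Function.Surjective (Phi : ↥(Tsub F k) →ₐ[F] _) := by
  rintro ⟨g1, g2⟩
  refine ⟨⟨buildf hk0 g1 g2, buildf_mem hk0 g1 g2⟩, ?_⟩
  refine Prod.ext ?_ ?_
  · apply LinearMap.ext; rintro ⟨x, hx⟩
    apply Subtype.ext
    obtain ⟨c, rfl⟩ := (memV1 F k).1 hx
    show buildf hk0 g1 g2 (c • 1) = _
    have htau : (⟨tau (c • (1:M)), tau_mem_V1 _⟩ : ↥V₁) = ⟨c • 1, hx⟩ :=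
      Subtype.ext (tau_smul_one hk0 c)
    have hpr : (⟨pr (F := F) (k := k) (c • (1:M)), pr_mem_V2 hk0 _⟩ : ↥V₂) = 0 :=
      Subtype.ext (pr_smul_one hk0 c)
    rw [buildf_apply, htau, hpr, map_zero]
    simp
  · apply LinearMap.ext; rintro ⟨x, hx⟩
    apply Subtype.ext
    have hx' : x.trace = 0 := (memV2 F k).1 hx
    show buildf hk0 g1 g2 x = _
    have htau : (⟨tau (F := F) (k := k) x, tau_mem_V1 _⟩ : ↥V₁) = 0 :=
      Subtype.ext (by simp [tau_apply, hx'])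
    have hpr : (⟨pr (F := F) (k := k) x, pr_mem_V2 hk0 _⟩ : ↥V₂) = ⟨x, hx⟩ :=
      Subtype.ext (pr_of_trace_zero hx')
    rw [buildf_apply, htau, hpr, map_zero]
    simp

/-- the algebra equivalence -/
noncomputable def TsubEquiv (hk0 : (k:F) ≠ 0) :
    ↥(Tsub F k) ≃ₐ[F] (Module.End F ↥V₁ × Module.End F ↥V₂) :=
  AlgEquiv.ofBijective Phi ⟨Phi_injective hk0, Phi_surjective hk0⟩

end Equiv

section Dim
set_option synthInstance.maxHeartbeats 1000000
set_option maxHeartbeats 1000000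

lemma one_ne_zero_M (hk : 0 < k) : (1 : M) ≠ 0 := by
  haveI : Nonempty (Fin k) := ⟨⟨0, hk⟩⟩
  exact one_ne_zero

lemma finrank_V1 (hk : 0 < k) :
    Module.finrank F ↥(Submodule.span F {(1 : M)}) = 1 :=
  finrank_span_singleton (one_ne_zero_M hk)

lemma trace_E (i : Fin k) (c : F) : (Matrix.single i i c : M).trace = c := by
  simp [Matrix.trace, Matrix.diag, Matrix.single, ite_and]

lemma trace_surj (hk : 0 < k) :
    Function.Surjective (Matrix.traceLinearMap (Fin k) F F) := by
  intro c
  exact ⟨Matrix.single ⟨0, hk⟩ ⟨0, hk⟩ c, trace_E _ c⟩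

lemma finrank_V2 (hk : 0 < k) :
    Module.finrank F ↥(LinearMap.ker (Matrix.traceLinearMap (Fin k) F F)) + 1 = k ^ 2 := by
  have h := LinearMap.finrank_range_add_finrank_ker (Matrix.traceLinearMap (Fin k) F F)
  rw [LinearMap.range_eq_top.2 (trace_surj hk), finrank_top, Module.finrank_self] at h
  rw [Module.finrank_matrix, Module.finrank_self, Fintype.card_fin] at h
  have : k * k * 1 = k ^ 2 := by ring
  omega

end Dim
end Part2

set_option synthInstance.maxHeartbeats 1000000 in
set_option maxHeartbeats 1000000 in
/-- Let `F` be a field of characteristic zero and `k ≥ 2`.  The unital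
`F`-subalgebra `U` of `End_F(M_k(F))` generated by the inner derivations `ad_a`, `a ∈ M_k(F)`,
equals the set of all `f ∈ End_F(M_k(F))` with `f(F·I_k) ⊆ F·I_k` and `f(sl_k(F)) ⊆ sl_k(F)`;
equivalently, `U ≅ End_F(F·I_k) ⊕ End_F(sl_k(F))` as `F`-algebras.  In particular
`dim_F U = (k² − 1)² + 1`. -/
theorem enveloping_algebra_of_inner_derivations_of_matrix_algebra
    (F : Type*) [Field F] [CharZero F] (k : ℕ) (hk : 2 ≤ k) :
    (∀ f : Module.End F (Matrix (Fin k) (Fin k) F),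
      f ∈ Algebra.adjoin F (Set.range fun a : Matrix (Fin k) (Fin k) F =>
            LinearMap.mulLeft F a - LinearMap.mulRight F a) ↔
        ((∀ x : Matrix (Fin k) (Fin k) F, (∃ c : F, x = c • (1 : Matrix (Fin k) (Fin k) F)) →
            ∃ c : F, f x = c • (1 : Matrix (Fin k) (Fin k) F)) ∧
          (∀ x : Matrix (Fin k) (Fin k) F, x.trace = 0 → (f x).trace = 0))) ∧
    Nonempty ((Algebra.adjoin F (Set.range fun a : Matrix (Fin k) (Fin k) F =>
            LinearMap.mulLeft F a - LinearMap.mulRight F a)) ≃ₐ[F]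
        (Module.End F (Submodule.span F {(1 : Matrix (Fin k) (Fin k) F)}) ×
          Module.End F (LinearMap.ker (Matrix.traceLinearMap (Fin k) F F)))) ∧
    Module.finrank F (Algebra.adjoin F (Set.range fun a : Matrix (Fin k) (Fin k) F =>
          LinearMap.mulLeft F a - LinearMap.mulRight F a)) = (k ^ 2 - 1) ^ 2 + 1 := by
  have hk0 : (k:F) ≠ 0 := Nat.cast_ne_zero.mpr (by omega)
  have h2 : (2:F) ≠ 0 := two_ne_zero
  have hUT : Part2.U F k = Part2.Tsub F k := Part2.U_eq_T hk0 h2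
  refine ⟨?_, ?_, ?_⟩
  · intro f
    constructor
    · intro hf
      have hf2 : f ∈ Part2.U F k := hf
      rw [hUT] at hf2
      exact hf2
    · intro hf
      show f ∈ Part2.U F k
      rw [hUT]
      exact hf
  · exact ⟨(Subalgebra.equivOfEq _ _ hUT).trans (Part2.TsubEquiv hk0)⟩
  · have e := ((Subalgebra.equivOfEq _ _ hUT).trans (Part2.TsubEquiv hk0)).toLinearEquiv
    have hr : Module.finrank F ↥(Part2.U F k)
        = Module.finrank F
            (Module.End F ↥(Submodule.span F {(1 : Matrix (Fin k) (Fin k) F)}) ×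
              Module.End F ↥(LinearMap.ker (Matrix.traceLinearMap (Fin k) F F))) :=
      LinearEquiv.finrank_eq e
    rw [Module.finrank_prod, Module.finrank_linearMap, Module.finrank_linearMap,
      Part2.finrank_V1 (F := F) (k := k) (by omega)] at hr
    have hn : Module.finrank F
        ↥(LinearMap.ker (Matrix.traceLinearMap (Fin k) F F)) + 1 = k ^ 2 :=
      Part2.finrank_V2 (F := F) (k := k) (by omega)
    have hn' : Module.finrank F
        ↥(LinearMap.ker (Matrix.traceLinearMap (Fin k) F F)) = k ^ 2 - 1 := by omega
    show Module.finrank F ↥(Part2.U F k) = (k ^ 2 - 1) ^ 2 + 1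
    rw [hr, hn']
    ring
end
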